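/- arXiv:1502.03371 — 4 statements merged into one kernel-verified Lean document; each statement's English description precedes it below -/
import Mathlib

section
/- Let p be a prime with p ≡ 3 (mod 4), K = GaloisField p 2, ι : ZMod p →+* K the algebra map, and i : K with i² = -1. Then for all a, b in ZMod p, (ι a + i * ι b)^(p+1) = ι (a² + b²), i.e. the (p+1)-st power of a Gaussian integer over GF(p) equals its quadratic norm a² + b². -/
theorem gaussian_norm_power (p : ℕ) [Fact p.Prime] (hp : p % 4 = 3)
    (i : GaloisField p 2) (hi : i ^ 2 = -1) :
    ∀ a b : ZMod p,
      (algebraMap (ZMod p) (GaloisField p 2) a + i * algebraMap (ZMod p) (GaloisField p 2) b) ^ (p + 1)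
        = algebraMap (ZMod p) (GaloisField p 2) (a ^ 2 + b ^ 2) := by
  intro a b
  set ι := algebraMap (ZMod p) (GaloisField p 2)
  have hpodd : p % 2 = 1 := by omega
  have hpdecomp : p = 2 * ((p - 1) / 2) + 1 := by omega
  have hkodd : (p - 1) / 2 % 2 = 1 := by omega
  have hip : i ^ p = -i := by
    calc i ^ p = i ^ (2 * ((p - 1) / 2) + 1) := by rw [← hpdecomp]
    _ = -i := by
      rw [pow_succ, pow_mul, hi, Odd.neg_one_pow ⟨(p-1)/2/2, by omega⟩, neg_one_mul]
  have hfix : ∀ c : ZMod p, (ι c) ^ p = ι c := by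
    intro c
    rw [← map_pow, ZMod.pow_card]
  have hchar : (p : GaloisField p 2) ≠ 0 → True := fun _ => trivial
  have key : (ι a + i * ι b) ^ p = ι a - i * ι b := by
    rw [add_pow_char, mul_pow, hip, hfix, hfix, neg_mul, sub_eq_add_neg]
  rw [pow_succ, key]
  ring_nf
  rw [hi]
  push_cast [map_add, map_pow]
  ring
end

section
/- Let p be a prime with p ≡ 3 (mod 4) and K = GaloisField p 2. Let A and B be subgroups of Kˣ with |A| = (p-1)/2 and |B| = 2(p+1). Then the multiplication map A × B → Kˣ sending (α, β) to αβ is a bijection; in particular every nonzero element of K is uniquely a product of an element of A (a 'modulus') and an element of B (a 'phase'). -/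
theorem polar_decomposition (p : ℕ) [Fact p.Prime] (hp : p % 4 = 3)
    (A B : Subgroup (GaloisField p 2)ˣ)
    (hA : Nat.card A = (p - 1) / 2) (hB : Nat.card B = 2 * (p + 1)) :
    Function.Bijective (fun x : A × B => (x.1 : (GaloisField p 2)ˣ) * (x.2 : (GaloisField p 2)ˣ)) := by
  have hp3 : 3 ≤ p := by
    have := (Fact.out : p.Prime).two_le
    omega
  -- coprimality
  have hcop : Nat.Coprime ((p - 1) / 2) (2 * (p + 1)) := by
    have hodd : ((p - 1) / 2) % 2 = 1 := by omega
    set d := Nat.gcd ((p - 1) / 2) (2 * (p + 1)) with hd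
    have hda : d ∣ (p - 1) / 2 := Nat.gcd_dvd_left _ _
    have hdb : d ∣ 2 * (p + 1) := Nat.gcd_dvd_right _ _
    have hd2 : ¬ (2 ∣ d) := by
      intro h
      have : 2 ∣ (p - 1) / 2 := h.trans hda
      omega
    have hdodd : Nat.Coprime d 2 :=
      ((Nat.prime_two.coprime_iff_not_dvd).mpr hd2).symm
    have hdp1 : d ∣ p + 1 := (Nat.Coprime.dvd_of_dvd_mul_left hdodd hdb)
    have hdp2 : d ∣ p - 1 := hda.trans ⟨2, by omega⟩
    have : d ∣ 2 := by
      have := Nat.dvd_sub hdp1 hdp2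
      simpa [show p + 1 - (p - 1) = 2 by omega] using this
    show d = 1
    rcases (Nat.dvd_prime Nat.prime_two).mp this with h | h
    · exact h
    · exact absurd (by rw [h]) hd2
  -- cardinality of the unit group
  have hcardG : Nat.card (GaloisField p 2)ˣ = p ^ 2 - 1 := by
    rw [Nat.card_units, GaloisField.card p 2 (by norm_num)]
  have harith : (p - 1) / 2 * (2 * (p + 1)) = p ^ 2 - 1 := by
    obtain ⟨q, hq⟩ : ∃ q, p = 2 * q + 1 := ⟨(p - 1) / 2, by omega⟩
    subst hq
    have h1 : (2 * q + 1 - 1) / 2 = q := by omega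
    rw [h1]
    apply Nat.eq_sub_of_add_eq
    ring
  -- trivial intersection
  have htriv : A ⊓ B = ⊥ := by
    rw [← Subgroup.card_eq_one (H := A ⊓ B)]
    have h1 : Nat.card (A ⊓ B : Subgroup (GaloisField p 2)ˣ) ∣ (p - 1) / 2 :=
      hA ▸ Subgroup.card_dvd_of_le inf_le_left
    have h2 : Nat.card (A ⊓ B : Subgroup (GaloisField p 2)ˣ) ∣ 2 * (p + 1) :=
      hB ▸ Subgroup.card_dvd_of_le inf_le_right
    exact Nat.dvd_one.mp (hcop ▸ Nat.dvd_gcd h1 h2)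
  have hinj : Function.Injective
      (fun x : A × B => (x.1 : (GaloisField p 2)ˣ) * (x.2 : (GaloisField p 2)ˣ)) := by
    rintro ⟨a, b⟩ ⟨c, d⟩ h
    simp only at h
    have hdval : (d : (GaloisField p 2)ˣ) = (c : (GaloisField p 2)ˣ)⁻¹ * ((a : (GaloisField p 2)ˣ) * b) := by
      rw [h]; group
    have key : (c : (GaloisField p 2)ˣ)⁻¹ * a = (d : (GaloisField p 2)ˣ) * (b : (GaloisField p 2)ˣ)⁻¹ := by
      rw [hdval]; group
    have hmem : (c : (GaloisField p 2)ˣ)⁻¹ * a ∈ A ⊓ B := by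
      refine Subgroup.mem_inf.mpr ⟨A.mul_mem (A.inv_mem c.2) a.2, ?_⟩
      rw [key]
      exact B.mul_mem d.2 (B.inv_mem b.2)
    rw [htriv, Subgroup.mem_bot] at hmem
    have hac : (a : (GaloisField p 2)ˣ) = c := by
      have := inv_mul_eq_one.mp hmem
      exact this.symm
    have hbd : (b : (GaloisField p 2)ˣ) = d := by
      rw [hac] at h
      exact mul_left_cancel h
    exact Prod.ext (Subtype.ext hac) (Subtype.ext hbd)
  rw [Nat.bijective_iff_injective_and_card]
  refine ⟨hinj, ?_⟩
  rw [Nat.card_prod, hA, hB, hcardG, harith]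
end

section
/- Let p be a prime with p ≡ 3 (mod 4), K = GaloisField p 2, ι : ZMod p →+* K the algebra map, and i : K with i² = -1. Then for all a, b in ZMod p, (ι a + i * ι b)^(2(p+1)) = ι ((a² + b²)²). -/
theorem gaussian_supra_norm_power (p : ℕ) [Fact p.Prime] (hp : p % 4 = 3)
    (i : GaloisField p 2) (hi : i ^ 2 = -1) :
    ∀ a b : ZMod p,
      (algebraMap (ZMod p) (GaloisField p 2) a + i * algebraMap (ZMod p) (GaloisField p 2) b) ^ (2 * (p + 1))
        = algebraMap (ZMod p) (GaloisField p 2) ((a ^ 2 + b ^ 2) ^ 2) := by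
  intro a b
  set ι := algebraMap (ZMod p) (GaloisField p 2)
  have hpodd : p % 2 = 1 := Nat.odd_of_mod_four_eq_three hp
  have hpdecomp : 2 * ((p - 1) / 2) + 1 = p := by omega
  have hkodd : Odd ((p - 1) / 2) := by
    refine ⟨p / 4, by omega⟩
  have hip : i ^ p = -i := by
    calc i ^ p = i ^ (2 * ((p - 1) / 2) + 1) := by rw [hpdecomp]
    _ = (i ^ 2) ^ ((p - 1) / 2) * i := by rw [pow_succ, pow_mul]
    _ = (-1 : GaloisField p 2) ^ ((p - 1) / 2) * i := by rw [hi]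
    _ = -i := by rw [hkodd.neg_one_pow, neg_one_mul]
  have hfrob : ∀ x : ZMod p, (ι x : GaloisField p 2) ^ p = ι x := by
    intro x
    rw [← map_pow, ZMod.pow_card]
  have key : (ι a + i * ι b) ^ (p + 1) = ι (a ^ 2 + b ^ 2) := by
    have h1 : (ι a + i * ι b) ^ p = ι a - i * ι b := by
      rw [add_pow_char _, mul_pow, hfrob, hfrob, hip, neg_mul, sub_eq_add_neg]
    calc (ι a + i * ι b) ^ (p + 1)
        = (ι a + i * ι b) ^ p * (ι a + i * ι b) := by rw [pow_succ]
      _ = (ι a - i * ι b) * (ι a + i * ι b) := by rw [h1]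
      _ = ι a ^ 2 - i ^ 2 * ι b ^ 2 := by ring
      _ = ι (a ^ 2 + b ^ 2) := by rw [hi, map_add, map_pow, map_pow]; ring
  rw [mul_comm 2 (p + 1), pow_mul, key, ← map_pow]
end

section
/- Let p = 2^n - 1 be a Mersenne prime with n ≥ 3, and K = GaloisField p 2. Then every ζ in Kˣ satisfying ζ^(p+1) = -1 (i.e. every Gaussian integer a + jb over GF(p) with a² + b² ≡ -1 mod p) has multiplicative order exactly 2(p+1) = 2^(n+1), hence is a generator of the supra-unimodular group {ζ ∈ Kˣ : ζ^(2(p+1)) = 1}. -/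
theorem mersenne_supra_unimodular_generator (n : ℕ) (hn : 3 ≤ n)
    (p : ℕ) (hp : p = 2 ^ n - 1) [Fact p.Prime]
    (ζ : (GaloisField p 2)ˣ) (hζ : ζ ^ (p + 1) = -1) :
    orderOf ζ = 2 * (p + 1) := by
  have hpow : (2:ℕ) ^ 3 ≤ 2 ^ n := Nat.pow_le_pow_right (by norm_num) hn
  have hpp1 : p + 1 = 2 ^ n := by omega
  have h2p : 2 * (p + 1) = 2 ^ (n + 1) := by rw [hpp1, pow_succ]; ring
  have hdvd : orderOf ζ ∣ 2 ^ (n + 1) := by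
    apply orderOf_dvd_of_pow_eq_one
    rw [← h2p, mul_comm, pow_mul, hζ]
    exact neg_one_sq
  have hne : (-1 : (GaloisField p 2)ˣ) ≠ 1 := by
    intro h
    have h' : (-1 : GaloisField p 2) = 1 := by
      simpa using congrArg (Units.val) h
    haveI : Fact (2 < p) := ⟨by omega⟩
    exact CharP.neg_one_ne_one (GaloisField p 2) p h'
  have hnot : ¬ orderOf ζ ∣ 2 ^ n := by
    intro h
    have := orderOf_dvd_iff_pow_eq_one.mp h
    rw [← hpp1, hζ] at this
    exact hne this
  obtain ⟨k, hk, hkeq⟩ := (Nat.dvd_prime_pow Nat.prime_two).mp hdvd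
  have hkn : k = n + 1 := by
    by_contra hne'
    exact hnot (hkeq ▸ pow_dvd_pow 2 (by omega))
  rw [hkeq, hkn, h2p]
end
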